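/- Let S be an open convex set in a real Banach space E and let f : S → ℝ be Fréchet differentiable and semistrictly quasiconvex. Then for all x, y ∈ S with f(y) < f(x), it holds that ⟨∇f(x), y − x⟩ ≤ 0. -/

import Mathlib

def SemistrictlyQuasiconvex {E : Type*} [NormedAddCommGroup E] [NormedSpace ℝ E]
    (S : Set E) (f : E → ℝ) : Prop :=
  ∀ x ∈ S, ∀ y ∈ S, ∀ l ∈ Set.Ioo (0:ℝ) 1,
    f y < f x → f (x + l • (y - x)) < f x

theorem stmt_12 {E : Type*} [NormedAddCommGroup E] [NormedSpace ℝ E] [CompleteSpace E]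
    {S : Set E} (hSo : IsOpen S) (hSc : Convex ℝ S)
    (f : E → ℝ) (f' : E → E →L[ℝ] ℝ)
    (hdiff : ∀ x ∈ S, HasFDerivAt f (f' x) x)
    (hssq : SemistrictlyQuasiconvex S f) :
    ∀ x ∈ S, ∀ y ∈ S, f y < f x → f' x (y - x) ≤ 0 := by
  intro x hx y hy hfy
  by_contra hpos
  push_neg at hpos
  set g : ℝ → ℝ := fun t => f (x + t • (y - x)) with hg
  have hline : HasDerivAt (fun t : ℝ => x + t • (y - x)) (y - x) 0 := by
    simpa using ((hasDerivAt_id (0:ℝ)).smul_const (y - x)).const_add x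
  have hgd : HasDerivAt g (f' x (y - x)) 0 := by
    have := HasFDerivAt.comp_hasDerivAt 0 (by simpa using (hdiff x hx)) hline
    exact this
  -- slope tends to the derivative > 0, so eventually g t > g 0 for small t > 0
  have hslope := hasDerivAt_iff_tendsto_slope.mp hgd
  have hev : ∀ᶠ t in nhdsWithin 0 {(0:ℝ)}ᶜ, 0 < slope g 0 t :=
    hslope.eventually (eventually_gt_nhds hpos)
  have hev' : ∀ᶠ t in nhdsWithin 0 (Set.Ioi (0:ℝ)), 0 < slope g 0 t :=
    hev.filter_mono (nhdsWithin_mono 0 (fun t ht => ne_of_gt ht))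
  have hlt1 : ∀ᶠ t in nhdsWithin 0 (Set.Ioi (0:ℝ)), t < 1 :=
    eventually_nhdsWithin_of_eventually_nhds (eventually_lt_nhds one_pos)
  have hself : ∀ᶠ t in nhdsWithin 0 (Set.Ioi (0:ℝ)), 0 < t := self_mem_nhdsWithin
  obtain ⟨t, hst, ht1, ht0⟩ := (hev'.and (hlt1.and hself)).exists
  have hgt : g 0 < g t := by
    rw [slope_def_field, div_pos_iff] at hst
    rcases hst with ⟨h1, h2⟩ | ⟨h1, h2⟩ <;> linarith
  have hlt := hssq x hx y hy t ⟨ht0, ht1⟩ hfy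
  simp only [hg, zero_smul, add_zero] at hgt
  linarith
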